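/- arXiv:2601.22839 — 5 statements merged into one kernel-verified Lean document; each statement's English description precedes it below -/
import Mathlib

section
/- Let F be a field of characteristic not 2 and A a Vidinli algebra over F, i.e., a conic algebra with norm q such that [A,A] ⊆ F·1. Then A decomposes as A = F·1 ⊕ V with V = {x ∈ A : q(x,1) = 0}, and there is a bilinear form B on A such that for all α, β ∈ F and u, v ∈ V, (α1 + u)(β1 + v) = (αβ − B(u,v))·1 + αv + βu. -/
/-- A Vidinli algebra over a field `F` of characteristic not `2` decomposes as
`F·1 ⊕ V`, with `V = {x | q(x,1) = 0}`, and the multiplication is given by a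
bilinear form `B` on `A`:
`(α1 + u)(β1 + v) = (αβ − B(u,v))·1 + αv + βu` for `u, v ∈ V`. -/
theorem stmt1 {F A : Type*} [Field F] [NonAssocRing A] [Module F A]
    [SMulCommClass F A A] [IsScalarTower F A A]
    (hchar : (2 : F) ≠ 0) (q : QuadraticForm F A)
    (hq1 : q 1 = 1)
    (hconic : ∀ x : A, x * x - QuadraticMap.polar q x 1 • x + q x • (1 : A) = 0)
    (hvid : ∀ x y : A, ∃ c : F, x * y - y * x = c • (1 : A)) :
    IsCompl (F ∙ (1 : A)) (LinearMap.ker ((QuadraticMap.polarBilin q).flip 1)) ∧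
    ∃ B : A →ₗ[F] A →ₗ[F] F, ∀ (α β : F) (u v : A),
      u ∈ LinearMap.ker ((QuadraticMap.polarBilin q).flip 1) →
      v ∈ LinearMap.ker ((QuadraticMap.polarBilin q).flip 1) →
      (α • (1 : A) + u) * (β • (1 : A) + v)
        = (α * β - B u v) • (1 : A) + (α • v + β • u) := by
  have hf : ∀ x : A, ((QuadraticMap.polarBilin q).flip 1) x
      = QuadraticMap.polar q x 1 := fun x => rfl
  have hp11 : QuadraticMap.polar q 1 1 = 2 := by
    have h2 : (1 : A) + 1 = (2 : F) • 1 := by rw [two_smul]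
    rw [QuadraticMap.polar, h2, QuadraticMap.map_smul, hq1]
    simp; ring
  -- IsCompl
  have hcompl : IsCompl (F ∙ (1 : A))
      (LinearMap.ker ((QuadraticMap.polarBilin q).flip 1)) := by
    constructor
    · rw [Submodule.disjoint_def]
      intro x hx hxk
      obtain ⟨c, rfl⟩ := Submodule.mem_span_singleton.mp hx
      rw [LinearMap.mem_ker, hf, QuadraticMap.polar_smul_left, hp11,
        smul_eq_mul] at hxk
      have : c = 0 := by
        rcases mul_eq_zero.mp hxk with h | h
        · exact h
        · exact absurd h hchar
      rw [this, zero_smul]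
    · rw [codisjoint_iff, eq_top_iff]
      intro x _
      refine Submodule.mem_sup.mpr ⟨((2 : F)⁻¹ * QuadraticMap.polar q x 1) • 1,
        Submodule.mem_span_singleton.mpr ⟨_, rfl⟩,
        x - ((2 : F)⁻¹ * QuadraticMap.polar q x 1) • 1, ?_, by abel⟩
      rw [LinearMap.mem_ker, hf, QuadraticMap.polar_sub_left,
        QuadraticMap.polar_smul_left, hp11, smul_eq_mul]
      field_simp
      ring
  refine ⟨hcompl, ?_⟩
  -- the bilinear form
  refine ⟨LinearMap.mk₂ F
      (fun x y => -((2 : F)⁻¹ * QuadraticMap.polar q (x * y) 1))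
      (fun x x' y => by
        rw [add_mul, QuadraticMap.polar_add_left]; ring)
      (fun a x y => by
        rw [smul_mul_assoc, QuadraticMap.polar_smul_left]; simp only [smul_eq_mul]; ring)
      (fun x y y' => by
        rw [mul_add, QuadraticMap.polar_add_left]; ring)
      (fun a x y => by
        rw [mul_smul_comm, QuadraticMap.polar_smul_left]; simp only [smul_eq_mul]; ring),
    ?_⟩
  intro α β u v hu hv
  rw [LinearMap.mem_ker, hf] at hu hv
  -- square of a V element
  have hsq : ∀ w : A, QuadraticMap.polar q w 1 = 0 → w * w = -(q w) • 1 := by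
    intro w hw
    have := hconic w
    rw [hw, zero_smul, sub_zero] at this
    linear_combination (norm := module) this
  have huv : QuadraticMap.polar q (u + v) 1 = 0 := by
    rw [QuadraticMap.polar_add_left, hu, hv, add_zero]
  -- u*v + v*u
  have hsum : u * v + v * u = -(QuadraticMap.polar q u v) • 1 := by
    have h1 := hsq u hu
    have h2 := hsq v hv
    have h3 := hsq (u + v) huv
    rw [add_mul, mul_add, mul_add] at h3
    have : u * v + v * u = -(q (u + v)) • 1 - (-(q u) • 1) - (-(q v) • 1) := by
      rw [← h1, ← h2]
      linear_combination (norm := module) h3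
    rw [this, QuadraticMap.polar]
    module
  obtain ⟨c, hc⟩ := hvid u v
  have s_def : u * v = ((2 : F)⁻¹ * (c - QuadraticMap.polar q u v)) • 1 := by
    have h2uv : (2 : F) • (u * v) = (c - QuadraticMap.polar q u v) • 1 := by
      have : (2 : F) • (u * v) = (u * v + v * u) + (u * v - v * u) := by
        rw [two_smul]; abel
      rw [this, hsum, hc]
      module
    calc u * v = (2 : F)⁻¹ • ((2 : F) • (u * v)) := by
          rw [smul_smul, inv_mul_cancel₀ hchar, one_smul]
      _ = _ := by rw [h2uv, smul_smul]
  have hB : QuadraticMap.polar q (u * v) 1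
      = ((2 : F)⁻¹ * (c - QuadraticMap.polar q u v)) * 2 := by
    rw [s_def, QuadraticMap.polar_smul_left, hp11, smul_eq_mul]
  -- expand the product
  have hexp : (α • (1 : A) + u) * (β • (1 : A) + v)
      = (α * β) • 1 + α • v + β • u + u * v := by
    simp only [add_mul, mul_add, smul_mul_assoc, mul_smul_comm, one_mul,
      mul_one, smul_smul, smul_add]
    module
  rw [hexp, LinearMap.mk₂_apply, hB, s_def]
  have hval : -((2 : F)⁻¹ * ((2 : F)⁻¹ * (c - QuadraticMap.polar q u v) * 2))
      = -((2 : F)⁻¹ * (c - QuadraticMap.polar q u v)) := by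
    field_simp
  rw [hval, sub_smul, neg_smul, sub_neg_eq_add]
  abel
end

section
/- Let F have characteristic 2 and A a Vidinli algebra over F with dim A ≥ 3 and norm q. Then q(x, 1) = 0 for every x ∈ A, where q(x,y) is the polar form of q; in particular x² = q(x)·1 for all x ∈ A. -/
/-- For a Vidinli algebra `A` of dimension at least `3` over a field of
characteristic `2`, the unit lies in the radical of the polar form of the norm:
`q(x,1) = 0` for all `x`; in particular `x² = q(x)·1` for all `x`. -/
theorem stmt15 {F A : Type*} [Field F] [NonAssocRing A] [Module F A]
    [SMulCommClass F A A] [IsScalarTower F A A]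
    (hchar : (2 : F) = 0) (q : QuadraticForm F A)
    (hq1 : q 1 = 1)
    (hconic : ∀ x : A, x * x - QuadraticMap.polar q x 1 • x + q x • (1 : A) = 0)
    (hvid : ∀ x y : A, ∃ c : F, x * y - y * x = c • (1 : A))
    (hdim : 3 ≤ Module.rank F A) :
    ∀ x : A, QuadraticMap.polar q x 1 = 0 ∧ x * x = q x • (1 : A) := by
  have h2A : ∀ a : A, a + a = 0 := by
    intro a
    have h : (2 : F) • a = 0 := by rw [hchar, zero_smul]
    rwa [two_smul] at h
  -- linearized conic identity
  have lin : ∀ z y : A,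
      z * y + y * z - QuadraticMap.polar q z 1 • y - QuadraticMap.polar q y 1 • z
        + QuadraticMap.polar q z y • (1 : A) = 0 := by
    intro z y
    have h := hconic (z + y)
    have h1 := hconic z
    have h2 := hconic y
    have expand : (z + y) * (z + y) = z * z + z * y + (y * z + y * y) := by
      rw [add_mul, mul_add, mul_add]
    rw [expand, QuadraticMap.polar_add_left, QuadraticMap.map_add (⇑q) z y] at h
    have key :
        z * y + y * z - QuadraticMap.polar q z 1 • y - QuadraticMap.polar q y 1 • z
          + QuadraticMap.polar q z y • (1 : A)
        = (z * z + z * y + (y * z + y * y)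
            - (QuadraticMap.polar q z 1 + QuadraticMap.polar q y 1) • (z + y)
            + (q z + q y + QuadraticMap.polar q z y) • (1 : A))
          - (z * z - QuadraticMap.polar q z 1 • z + q z • (1 : A))
          - (y * y - QuadraticMap.polar q y 1 • y + q y • (1 : A)) := by
      module
    rw [key, h, h1, h2]
    simp
  have key : ∀ z : A, QuadraticMap.polar q z 1 = 0 := by
    by_contra h
    push_neg at h
    obtain ⟨z, hz⟩ := h
    have hspan : (⊤ : Submodule F A) ≤ Submodule.span F {(1 : A), z} := by
      intro y _
      obtain ⟨c, hc⟩ := hvid z y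
      have hsum : z * y + y * z = c • (1 : A) := by
        have : z * y + y * z = z * y - y * z := by
          rw [sub_eq_add_neg]
          congr 1
          exact (neg_eq_of_add_eq_zero_right (h2A (y * z))).symm
        rw [this, hc]
      have hl := lin z y
      rw [hsum] at hl
      have hy : QuadraticMap.polar q z 1 • y =
          (c + QuadraticMap.polar q z y) • (1 : A) - QuadraticMap.polar q y 1 • z := by
        linear_combination (norm := module) -hl
      have : y = (QuadraticMap.polar q z 1)⁻¹ •
          ((c + QuadraticMap.polar q z y) • (1 : A) - QuadraticMap.polar q y 1 • z) := by
        rw [← hy, smul_smul, inv_mul_cancel₀ hz, one_smul]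
      rw [this]
      have h1mem : (1 : A) ∈ Submodule.span F {(1 : A), z} :=
        Submodule.subset_span (by simp)
      have hzmem : z ∈ Submodule.span F {(1 : A), z} :=
        Submodule.subset_span (by simp)
      exact Submodule.smul_mem _ _ (Submodule.sub_mem _ (Submodule.smul_mem _ _ h1mem)
        (Submodule.smul_mem _ _ hzmem))
    have hspan' : Submodule.span F {(1 : A), z} = ⊤ := top_le_iff.mp hspan
    have hrank : Module.rank F A ≤ 2 := by
      have h1 : Module.rank F A =
          Module.rank F (Submodule.span F {(1 : A), z}) := by
        rw [hspan', rank_top]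
      have h2 : Module.rank F (Submodule.span F ({(1 : A), z} : Set A)) ≤
          Cardinal.mk ({(1 : A), z} : Set A) := rank_span_le _
      have h3 : Cardinal.mk ({(1 : A), z} : Set A) ≤ 2 := by
        refine (Cardinal.mk_insert_le).trans ?_
        rw [Cardinal.mk_singleton]
        norm_num
      exact h1 ▸ (h2.trans h3)
    have : (3 : Cardinal) ≤ 2 := hdim.trans hrank
    norm_num at this
  intro x
  refine ⟨key x, ?_⟩
  have h := hconic x
  rw [key x, zero_smul, sub_zero] at h
  have := neg_eq_of_add_eq_zero_left h
  rw [← this]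
  exact neg_eq_of_add_eq_zero_right (h2A (q x • (1 : A)))
end

section
/- Let F have characteristic 2, (V, *) an anticommutative F-algebra (u*u = 0 for all u) and φ : V × V → F a bilinear form. The algebra A(V,*,φ) on F ⊕ V with multiplication (α1+u)(β1+v) = (αβ + φ(u,v))·1 + (αv + βu + u*v) is a Vidinli algebra with norm q(α1+u) = α² + φ(u,u): it is unital, satisfies x² = q(x)·1 for all x, and all commutators lie in F·1. -/
/-- The multiplication of the unital algebra `A(V,*,φ)` on `F ⊕ V`:
`(α1+u)(β1+v) = (αβ + φ(u,v))·1 + (αv + βu + u*v)`. -/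
def amul {F V : Type*} [Field F] [AddCommGroup V] [Module F V]
    (φ : V →ₗ[F] V →ₗ[F] F) (m : V →ₗ[F] V →ₗ[F] V) (x y : F × V) : F × V :=
  (x.1 * y.1 + φ x.2 y.2, x.1 • y.2 + y.1 • x.2 + m x.2 y.2)

/-- In characteristic `2`, the algebra `A(V,*,φ)` attached to an anticommutative
algebra `(V,*)` and a bilinear form `φ` is a Vidinli algebra with norm
`q(α1+u) = α² + φ(u,u)`: it is unital, `x² = q(x)·1`, and all commutators lie
in `F·1`. -/
theorem stmt17 {F V : Type*} [Field F] [AddCommGroup V] [Module F V]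
    (hchar : (2 : F) = 0)
    (m : V →ₗ[F] V →ₗ[F] V) (hm : ∀ u : V, m u u = 0)
    (φ : V →ₗ[F] V →ₗ[F] F) :
    (∀ x : F × V, amul φ m (1, 0) x = x ∧ amul φ m x (1, 0) = x) ∧
    ((fun x : F × V => x.1 ^ 2 + φ x.2 x.2) ((1, 0) : F × V) = 1) ∧
    (∀ x : F × V, amul φ m x x = (x.1 ^ 2 + φ x.2 x.2) • ((1, 0) : F × V)) ∧
    (∀ x y : F × V, ∃ c : F,
      amul φ m x y - amul φ m y x = c • ((1, 0) : F × V)) := by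

  have hanti : ∀ u v : V, m u v = - m v u := by
    intro u v
    have h := hm (u + v)
    simp only [map_add, LinearMap.add_apply, hm] at h
    linear_combination (norm := abel) h
  refine ⟨?_, ?_, ?_, ?_⟩
  · intro x
    constructor <;> simp [amul, Prod.ext_iff]
  · simp
  · intro x
    have h2 : x.1 • x.2 + x.1 • x.2 = 0 := by
      rw [← two_smul F, hchar, zero_smul]
    simp [amul, Prod.ext_iff, hm, sq, h2]
  · intro x y
    refine ⟨φ x.2 y.2 - φ y.2 x.2, ?_⟩
    simp only [amul, Prod.mk_sub_mk, Prod.smul_mk, smul_eq_mul, mul_one, smul_zero,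
      Prod.ext_iff]
    constructor
    · ring
    · rw [hanti x.2 y.2]
      have h2 : (m y.2) x.2 + (m y.2) x.2 = 0 := by
        rw [← two_smul F, hchar, zero_smul]
      linear_combination (norm := abel) -h2
end

section
/- Let F have characteristic 2, (V,*) and (W,⋄) anticommutative F-algebras with bilinear forms φ and ψ. The Vidinli algebras A(V,*,φ) and A(W,⋄,ψ) are isomorphic as unital algebras if and only if there exist a linear form f ∈ V* and a linear isomorphism Φ : V → W such that Φ(u*v + f(u)v + f(v)u) = Φ(u) ⋄ Φ(v) and φ(u,v) + f(u)f(v) + f(u*v) = ψ(Φ(u), Φ(v)) for all u, v ∈ V. -/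
/-- In characteristic `2`, the Vidinli algebras `A(V,*,φ)` and `A(W,⋄,ψ)` are
isomorphic as unital algebras iff there are a linear form `f ∈ V*` and a linear
isomorphism `Φ : V → W` with `Φ(u*v + f(u)v + f(v)u) = Φ(u) ⋄ Φ(v)` and
`φ(u,v) + f(u)f(v) + f(u*v) = ψ(Φ(u), Φ(v))` for all `u, v`. -/
theorem stmt18 {F V W : Type*} [Field F] [AddCommGroup V] [Module F V]
    [AddCommGroup W] [Module F W]
    (hchar : (2 : F) = 0)
    (m : V →ₗ[F] V →ₗ[F] V) (hm : ∀ u : V, m u u = 0)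
    (n : W →ₗ[F] W →ₗ[F] W) (hn : ∀ w : W, n w w = 0)
    (φ : V →ₗ[F] V →ₗ[F] F) (ψ : W →ₗ[F] W →ₗ[F] F) :
    (∃ e : (F × V) ≃ₗ[F] (F × W),
      e ((1, 0) : F × V) = (1, 0) ∧
      ∀ x y : F × V, e (amul φ m x y) = amul ψ n (e x) (e y)) ↔
    (∃ (f : V →ₗ[F] F) (Φ : V ≃ₗ[F] W),
      (∀ u v : V, Φ (m u v + f u • v + f v • u) = n (Φ u) (Φ v)) ∧
      (∀ u v : V, φ u v + f u * f v + f (m u v) = ψ (Φ u) (Φ v))) := by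
  have h2F : ∀ x : F, x + x = 0 := by
    intro x
    have h := two_smul F x
    rw [hchar, zero_smul] at h
    exact h.symm
  have h2 : ∀ x : W, x + x = 0 := by
    intro x
    have h := two_smul F x
    rw [hchar, zero_smul] at h
    exact h.symm
  constructor
  · rintro ⟨e, he1, hmul⟩
    set f : V →ₗ[F] F := (LinearMap.fst F F W).comp (e.toLinearMap.comp (LinearMap.inr F F V)) with hf
    set Φ0 : V →ₗ[F] W := (LinearMap.snd F F W).comp (e.toLinearMap.comp (LinearMap.inr F F V)) with hΦ
    have hev : ∀ v : V, e (0, v) = (f v, Φ0 v) := fun v => rfl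
    have key : ∀ (α : F) (v : V), e (α, v) = (α + f v, Φ0 v) := by
      intro α v
      have h1 : (α, v) = α • ((1,0) : F × V) + (0, v) := by
        simp [Prod.ext_iff]
      rw [h1, map_add, map_smul, he1, hev]
      simp [Prod.ext_iff]
    have hinj : Function.Injective Φ0 := by
      intro a b hab
      have h1 : e (0, a) + e (f b, 0) = e (0, b) + e (f a, 0) := by
        rw [hev, hev, key, key]
        simp [Prod.ext_iff, hab]
        ring
      rw [← map_add, ← map_add] at h1
      have h2' := e.injective h1
      have := congrArg Prod.snd h2'
      simpa using this
    have hsurj : Function.Surjective Φ0 := by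
      intro w
      obtain ⟨⟨α, v⟩, hv⟩ := e.surjective (0, w)
      refine ⟨v, ?_⟩
      rw [key] at hv
      exact congrArg Prod.snd hv
    refine ⟨f, LinearEquiv.ofBijective Φ0 ⟨hinj, hsurj⟩, ?_, ?_⟩
    · intro u v
      have h1 := hmul (0, u) (0, v)
      rw [hev, hev] at h1
      simp only [amul, zero_mul, zero_add, zero_smul, add_zero] at h1
      rw [key] at h1
      simp only [Prod.ext_iff] at h1
      obtain ⟨_, h1b⟩ := h1
      show Φ0 (m u v + f u • v + f v • u) = n (Φ0 u) (Φ0 v)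
      rw [map_add, map_add, map_smul, map_smul, h1b]
      have hA := h2 (f u • Φ0 v)
      have hB := h2 (f v • Φ0 u)
      have : f u • Φ0 v + f v • Φ0 u + n (Φ0 u) (Φ0 v) + f u • Φ0 v + f v • Φ0 u
          = (f u • Φ0 v + f u • Φ0 v) + ((f v • Φ0 u + f v • Φ0 u) + n (Φ0 u) (Φ0 v)) := by
        abel
      rw [this, hA, hB]
      simp
    · intro u v
      have h1 := hmul (0, u) (0, v)
      rw [hev, hev] at h1
      simp only [amul, zero_mul, zero_add, zero_smul, add_zero] at h1
      rw [key] at h1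
      simp only [Prod.ext_iff] at h1
      obtain ⟨h1a, _⟩ := h1
      show φ u v + f u * f v + f (m u v) = ψ (Φ0 u) (Φ0 v)
      linear_combination h1a + f u * f v * hchar
  · rintro ⟨f, Φ, hΦ, hφ⟩
    refine ⟨{ toFun := fun x => (x.1 + f x.2, Φ x.2),
              invFun := fun y => (y.1 + f (Φ.symm y.2), Φ.symm y.2),
              map_add' := by intro x y; simp [Prod.ext_iff]; ring
              map_smul' := by intro c x; simp [Prod.ext_iff, smul_add, mul_add]
              left_inv := by
                intro x
                simp [Prod.ext_iff, add_assoc, h2F (f x.2)]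
              right_inv := by
                intro y
                simp [Prod.ext_iff, add_assoc, h2F (f (Φ.symm y.2))] }, ?_, ?_⟩
    · simp
    · intro x y
      simp only [amul, LinearEquiv.coe_mk, LinearMap.coe_mk, AddHom.coe_mk, Prod.ext_iff, map_add, map_smul]
      constructor
      · simp only [map_add, map_smul, smul_eq_mul]
        linear_combination hφ x.2 y.2 - f x.2 * f y.2 * hchar
      · rw [← hΦ x.2 y.2]
        simp only [map_add, map_smul]
        have hA := h2 (f x.2 • Φ y.2)
        have hB := h2 (f y.2 • Φ x.2)
        have heq : (x.1 + f x.2) • Φ y.2 + (y.1 + f y.2) • Φ x.2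
            + (Φ (m x.2 y.2) + f x.2 • Φ y.2 + f y.2 • Φ x.2)
            = x.1 • Φ y.2 + y.1 • Φ x.2 + Φ (m x.2 y.2)
              + (f x.2 • Φ y.2 + f x.2 • Φ y.2) + (f y.2 • Φ x.2 + f y.2 • Φ x.2) := by
          rw [add_smul, add_smul]; abel
        rw [heq, hA, hB]
        simp
end

section
/- Let F have characteristic 2 and A = A(V,*,φ) a Vidinli algebra of dimension at least 3. Then the nucleus N(A) equals the center Z(A), and moreover either Z(A) = F·1 or A is commutative (equivalently, φ is symmetric). -/
/-- The associator of `A(V,*,φ)`. -/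
def aassoc {F V : Type*} [Field F] [AddCommGroup V] [Module F V]
    (φ : V →ₗ[F] V →ₗ[F] F) (m : V →ₗ[F] V →ₗ[F] V) (x y z : F × V) : F × V :=
  amul φ m (amul φ m x y) z - amul φ m x (amul φ m y z)

/-- For a Vidinli algebra `A = A(V,*,φ)` of dimension at least `3` over a field
of characteristic `2`, the nucleus equals the center, and either the center is
`F·1` or `A` is commutative (equivalently, `φ` is symmetric). -/
theorem stmt19 {F V : Type*} [Field F] [AddCommGroup V] [Module F V]
    (hchar : (2 : F) = 0)
    (m : V →ₗ[F] V →ₗ[F] V) (hm : ∀ u : V, m u u = 0)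
    (φ : V →ₗ[F] V →ₗ[F] F)
    (hdim : 3 ≤ Module.rank F (F × V)) :
    ({x : F × V | ∀ y z : F × V,
        aassoc φ m x y z = 0 ∧ aassoc φ m y x z = 0 ∧ aassoc φ m y z x = 0}
      = {x : F × V | (∀ y z : F × V,
          aassoc φ m x y z = 0 ∧ aassoc φ m y x z = 0 ∧ aassoc φ m y z x = 0) ∧
          ∀ y : F × V, amul φ m x y = amul φ m y x}) ∧
    ({x : F × V | (∀ y z : F × V,
        aassoc φ m x y z = 0 ∧ aassoc φ m y x z = 0 ∧ aassoc φ m y z x = 0) ∧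
        ∀ y : F × V, amul φ m x y = amul φ m y x}
        = Set.range (fun α : F => ((α, 0) : F × V)) ∨
      ∀ x y : F × V, amul φ m x y = amul φ m y x) ∧
    ((∀ x y : F × V, amul φ m x y = amul φ m y x) ↔ ∀ u v : V, φ u v = φ v u) := by
  classical
  -- characteristic-two facts
  have hV2 : ∀ v : V, v + v = 0 := by
    intro v
    have h : (2 : F) • v = 0 := by rw [hchar, zero_smul]
    rwa [two_smul] at h
  have hms : ∀ v w : V, m v w = m w v := by
    intro v w
    have h := hm (v + w)
    simp only [map_add, LinearMap.add_apply, hm, zero_add, add_zero] at h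
    rw [add_comm] at h
    have h2 : m v w = -(m w v) := eq_neg_of_add_eq_zero_left h
    rw [h2, neg_eq_of_add_eq_zero_left (hV2 (m w v))]
  -- associator formula
  have hA : ∀ x y z : F × V, aassoc φ m x y z =
      (φ (m x.2 y.2) z.2 - φ x.2 (m y.2 z.2),
       φ x.2 y.2 • z.2 - φ y.2 z.2 • x.2 + m (m x.2 y.2) z.2 - m x.2 (m y.2 z.2)) := by
    rintro ⟨a, u⟩ ⟨b, v⟩ ⟨c, w⟩
    simp only [aassoc, amul, Prod.mk_sub_mk, Prod.mk.injEq, map_add, map_smul,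
      LinearMap.add_apply, LinearMap.smul_apply, smul_eq_mul]
    constructor
    · ring
    · module
  -- commutation criterion
  have hCm : ∀ x y : F × V, amul φ m x y = amul φ m y x ↔ φ x.2 y.2 = φ y.2 x.2 := by
    intro x y
    simp only [amul, Prod.mk.injEq]
    constructor
    · rintro ⟨h1, -⟩
      have := h1
      rw [mul_comm] at this
      exact add_left_cancel this
    · intro h
      refine ⟨by rw [h, mul_comm], ?_⟩
      rw [hms]
      abel
  -- the third part (iff)
  have hIff : (∀ x y : F × V, amul φ m x y = amul φ m y x) ↔ ∀ u v : V, φ u v = φ v u := by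
    constructor
    · intro h u v
      exact (hCm (0, u) (0, v)).mp (h _ _)
    · intro h x y
      exact (hCm x y).mpr (h _ _)
  -- nucleus elements commute
  have hNK : ∀ x : F × V,
      (∀ y z : F × V, aassoc φ m x y z = 0 ∧ aassoc φ m y x z = 0 ∧ aassoc φ m y z x = 0) →
      ∀ v : V, φ x.2 v = φ v x.2 := by
    intro x hx v
    set u := x.2 with hu
    have h := (hx (0, v) (0, v)).2.1
    rw [hA] at h
    simp only [Prod.mk_eq_zero] at h
    have h2 := h.2
    simp only [← hu] at h2
    -- h2 : φ v u • v - φ u v • v + m (m v u) v - m v (m u v) = 0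
    rw [hms v u, hms v (m u v)] at h2
    have h3 : φ v u • v - φ u v • v
        = φ v u • v - φ u v • v + m (m u v) v - m (m u v) v := by abel
    rw [h2] at h3
    rw [← sub_smul] at h3
    rcases smul_eq_zero.mp h3 with hc | hc
    · exact (sub_eq_zero.mp hc).symm
    · subst hc; simp
  refine ⟨?_, ?_, hIff⟩
  · ext x
    simp only [Set.mem_setOf_eq]
    exact ⟨fun hx => ⟨hx, fun y => (hCm x y).mpr (hNK x hx y.2)⟩, fun h => h.1⟩
  · by_cases h0 : ∀ x : F × V,
        ((∀ y z : F × V, aassoc φ m x y z = 0 ∧ aassoc φ m y x z = 0 ∧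
            aassoc φ m y z x = 0) ∧ ∀ y : F × V, amul φ m x y = amul φ m y x) → x.2 = 0
    · left
      ext x
      simp only [Set.mem_setOf_eq, Set.mem_range]
      constructor
      · intro hx
        exact ⟨x.1, Prod.ext rfl (h0 x hx).symm⟩
      · rintro ⟨α, rfl⟩
        constructor
        · intro y z
          refine ⟨?_, ?_, ?_⟩ <;> rw [hA] <;> simp
        · intro y
          rw [hCm]
          simp
    · right
      push_neg at h0
      obtain ⟨x, hx, hu⟩ := h0
      refine hIff.mpr ?_
      intro v w
      set u := x.2 with huu
      have ha : ∀ v : V, φ v u = φ u v := fun v => ((hCm x (0, v)).mp (hx.2 (0, v))).symm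
      have hx1 := hx.1
      have e1 := (hx1 (0, v) (0, w)).1
      have e1' := (hx1 (0, w) (0, v)).1
      have e2 := (hx1 (0, v) (0, w)).2.1
      rw [hA] at e1 e1' e2
      simp only [Prod.mk_eq_zero] at e1 e1' e2
      have E1 := e1.2; have E1' := e1'.2; have E2 := e2.2
      simp only [← huu] at E1 E1' E2
      -- E1 : φ u v • w - φ v w • u + m (m u v) w - m u (m v w) = 0
      -- E1' : φ u w • v - φ w v • u + m (m u w) v - m u (m w v) = 0
      -- E2 : φ v u • w - φ u w • v + m (m v u) w - m v (m u w) = 0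
      rw [hms w v] at E1'
      rw [ha v, hms v u, hms v (m u w)] at E2
      have key : φ w v • u - φ v w • u
          = (φ u v • w - φ v w • u + m (m u v) w - m u (m v w))
            - (φ u w • v - φ w v • u + m (m u w) v - m u (m v w))
            - (φ u v • w - φ u w • v + m (m u v) w - m (m u w) v) := by abel
      rw [E1, E1', E2] at key
      simp only [zero_sub, sub_zero, neg_zero, sub_neg_eq_add, zero_add] at key
      rw [← sub_smul] at key
      rcases smul_eq_zero.mp key with hc | hc
      · exact (sub_eq_zero.mp hc).symm
      · exact absurd hc hu
end
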